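/- arXiv:1809.03403 — 4 statements merged into one kernel-verified Lean document; each statement's English description precedes it below -/
import Mathlib

section
/- The normalized robustness of coherence is continuous: for D-dimensional density matrices ρ and τ with ‖ρ − τ‖₁ < δ where δ = ((D−1)/D)·ε, we have |C_R(ρ) − C_R(τ)| < ε. -/
open scoped ComplexOrder

/-- A `D`-dimensional density matrix: positive semidefinite with unit trace. -/
def IsDensity {D : ℕ} (ρ : Matrix (Fin D) (Fin D) ℂ) : Prop :=
  ρ.PosSemidef ∧ ρ.trace = 1

/-- An incoherent state: a diagonal density matrix (w.r.t. the fixed basis). -/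
def IsIncoherent {D : ℕ} (σ : Matrix (Fin D) (Fin D) ℂ) : Prop :=
  IsDensity σ ∧ ∃ d : Fin D → ℝ, σ = Matrix.diagonal fun i => (d i : ℂ)

/-- The normalized robustness of coherence
`C_R(ρ) = (1/(D−1))·inf{s ≥ 0 : ∃ incoherent σ, ρ ≤ (1+s)σ}`. -/
noncomputable def CR {D : ℕ} (ρ : Matrix (Fin D) (Fin D) ℂ) : ℝ :=
  (1 / ((D : ℝ) - 1)) *
    sInf {s : ℝ | 0 ≤ s ∧ ∃ σ, IsIncoherent σ ∧ ((1 + s : ℂ) • σ - ρ).PosSemidef}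

namespace RobustnessAux

open Matrix

variable {n : ℕ}

/-- The robustness feasible set. -/
def S {D : ℕ} (ρ : Matrix (Fin D) (Fin D) ℂ) : Set ℝ :=
  {s : ℝ | 0 ≤ s ∧ ∃ σ, IsIncoherent σ ∧ ((1 + s : ℂ) • σ - ρ).PosSemidef}

lemma smul_psd {M : Matrix (Fin n) (Fin n) ℂ} (hM : M.PosSemidef) {c : ℝ} (hc : 0 ≤ c) :
    ((c : ℂ) • M).PosSemidef := by
  rw [posSemidef_iff_dotProduct_mulVec]
  constructor
  · unfold Matrix.IsHermitian
    rw [conjTranspose_smul, hM.1.eq]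
    norm_num
  · intro x
    rw [smul_mulVec, dotProduct_smul]
    exact smul_nonneg (by exact_mod_cast hc) (hM.dotProduct_mulVec_nonneg x)

lemma trace_eq_sum_eig (A : Matrix (Fin n) (Fin n) ℂ) (hA : A.IsHermitian) :
    A.trace = ∑ i, (hA.eigenvalues i : ℂ) := by
  conv_lhs => rw [hA.spectral_theorem, Unitary.conjStarAlgAut_apply]
  rw [Matrix.trace_mul_cycle,
    show (star (hA.eigenvectorUnitary : Matrix (Fin n) (Fin n) ℂ)) *
      (hA.eigenvectorUnitary : Matrix (Fin n) (Fin n) ℂ) = 1 from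
        Matrix.mem_unitaryGroup_iff'.mp hA.eigenvectorUnitary.2,
    one_mul, Matrix.trace_diagonal]
  rfl

lemma herm_le_smul_one {A : Matrix (Fin n) (Fin n) ℂ} (hA : A.IsHermitian) {c : ℝ}
    (h : ∀ i, hA.eigenvalues i ≤ c) : ((c : ℂ) • 1 - A).PosSemidef := by
  set U : Matrix (Fin n) (Fin n) ℂ := (hA.eigenvectorUnitary : Matrix (Fin n) (Fin n) ℂ) with hUdef
  have hU : U * star U = 1 := Matrix.mem_unitaryGroup_iff.mp hA.eigenvectorUnitary.2
  have hd : (c : ℂ) • (1 : Matrix (Fin n) (Fin n) ℂ)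
      - Matrix.diagonal (RCLike.ofReal ∘ hA.eigenvalues)
      = Matrix.diagonal fun i => ((c - hA.eigenvalues i : ℝ) : ℂ) := by
    ext i j
    rcases eq_or_ne i j with rfl | hij
    · simp [Matrix.diagonal_apply_eq, Matrix.one_apply_eq]
    · simp [Matrix.diagonal_apply_ne _ hij, Matrix.one_apply_ne hij]
  have key : U * (Matrix.diagonal fun i => ((c - hA.eigenvalues i : ℝ) : ℂ)) * Uᴴ
      = (c : ℂ) • 1 - A := by
    rw [← Matrix.star_eq_conjTranspose, ← hd, Matrix.mul_sub, Matrix.sub_mul,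
      Matrix.mul_smul, Matrix.mul_one, Matrix.smul_mul, hU]
    rw [hUdef]; conv_rhs => rw [hA.spectral_theorem, Unitary.conjStarAlgAut_apply]
  rw [← key]
  exact (Matrix.posSemidef_diagonal_iff.mpr fun i => by
    rw [show ((0:ℂ) = ((0:ℝ):ℂ)) by norm_num, Complex.real_le_real]
    linarith [h i]).mul_mul_conjTranspose_same _

lemma herm_add_smul_one {A : Matrix (Fin n) (Fin n) ℂ} (hA : A.IsHermitian) {c : ℝ}
    (h : ∀ i, -c ≤ hA.eigenvalues i) : ((c : ℂ) • 1 + A).PosSemidef := by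
  set U : Matrix (Fin n) (Fin n) ℂ := (hA.eigenvectorUnitary : Matrix (Fin n) (Fin n) ℂ) with hUdef
  have hU : U * star U = 1 := Matrix.mem_unitaryGroup_iff.mp hA.eigenvectorUnitary.2
  have hd : (c : ℂ) • (1 : Matrix (Fin n) (Fin n) ℂ)
      + Matrix.diagonal (RCLike.ofReal ∘ hA.eigenvalues)
      = Matrix.diagonal fun i => ((c + hA.eigenvalues i : ℝ) : ℂ) := by
    ext i j
    rcases eq_or_ne i j with rfl | hij
    · simp [Matrix.diagonal_apply_eq, Matrix.one_apply_eq]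
    · simp [Matrix.diagonal_apply_ne _ hij, Matrix.one_apply_ne hij]
  have key : U * (Matrix.diagonal fun i => ((c + hA.eigenvalues i : ℝ) : ℂ)) * Uᴴ
      = (c : ℂ) • 1 + A := by
    rw [← Matrix.star_eq_conjTranspose, ← hd, Matrix.mul_add, Matrix.add_mul,
      Matrix.mul_smul, Matrix.mul_one, Matrix.smul_mul, hU]
    rw [hUdef]; conv_rhs => rw [hA.spectral_theorem, Unitary.conjStarAlgAut_apply]
  rw [← key]
  exact (Matrix.posSemidef_diagonal_iff.mpr fun i => by
    rw [show ((0:ℂ) = ((0:ℝ):ℂ)) by norm_num, Complex.real_le_real]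
    linarith [h i]).mul_mul_conjTranspose_same _

/-- The maximally mixed state. -/
lemma maximally_mixed_mem {D : ℕ} (hD : 2 ≤ D) (ρ : Matrix (Fin D) (Fin D) ℂ)
    (hρ : IsDensity ρ) : ((D : ℝ) - 1) ∈ S ρ := by
  have hD0 : (0:ℝ) < (D:ℝ) := by positivity
  have hD0' : (D:ℝ) ≠ 0 := ne_of_gt hD0
  refine ⟨by
    have : (2:ℝ) ≤ (D:ℝ) := by exact_mod_cast hD
    linarith, (((D:ℝ)⁻¹ : ℝ) : ℂ) • 1, ⟨⟨⟨smul_psd Matrix.PosSemidef.one (by positivity), by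
      rw [Matrix.trace_smul, Matrix.trace_one]
      simp [Fintype.card_fin]
      field_simp⟩, fun i => (D:ℝ)⁻¹, by
        ext i j
        rcases eq_or_ne i j with rfl | hij
        · simp [Matrix.one_apply_eq]
        · simp [Matrix.one_apply_ne hij, Matrix.diagonal_apply_ne _ hij]⟩, ?_⟩⟩
  have hcast : (1 + (((D:ℝ) - 1 : ℝ) : ℂ)) = ((D:ℝ) : ℂ) := by push_cast; ring
  rw [hcast, smul_smul, show ((D:ℝ) : ℂ) * (((D:ℝ)⁻¹ : ℝ) : ℂ) = 1 by
    push_cast; field_simp, one_smul]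
  -- now need (1 - ρ).PosSemidef
  have hsum : ∑ i, hρ.1.1.eigenvalues i = 1 := by
    have h1 : (∑ i, (hρ.1.1.eigenvalues i : ℂ)) = 1 :=
      (trace_eq_sum_eig ρ hρ.1.1).symm.trans hρ.2
    exact_mod_cast h1
  have hone : ((1:ℝ) : ℂ) • (1 : Matrix (Fin D) (Fin D) ℂ) - ρ = 1 - ρ := by
    norm_num
  rw [← hone]
  refine herm_le_smul_one hρ.1.1 fun i => ?_
  calc hρ.1.1.eigenvalues i ≤ ∑ j, hρ.1.1.eigenvalues j :=
        Finset.single_le_sum (fun j _ => hρ.1.eigenvalues_nonneg j)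
          (Finset.mem_univ i)
    _ = 1 := hsum

lemma bddBelow_S {D : ℕ} (ρ : Matrix (Fin D) (Fin D) ℂ) : BddBelow (S ρ) :=
  ⟨0, fun _ hs => hs.1⟩

lemma key_ineq {D : ℕ} (hD : 2 ≤ D) (ρ τ : Matrix (Fin D) (Fin D) ℂ)
    (hρ : IsDensity ρ) (hτ : IsDensity τ) (t : ℝ) (ht : 0 ≤ t)
    (hpsd : ((t : ℂ) • 1 - (ρ - τ)).PosSemidef) :
    sInf (S ρ) ≤ sInf (S τ) + t * D := by
  have hne : (S τ).Nonempty := ⟨_, maximally_mixed_mem hD τ hτ⟩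
  have h : ∀ s ∈ S τ, sInf (S ρ) - t * D ≤ s := by
    intro s hs
    obtain ⟨hs0, σ, hσinc, hσpsd⟩ := hs
    obtain ⟨⟨hσpos, hσtr⟩, d, hσd⟩ := hσinc
    set r : ℝ := 1 + s + t * D with hr
    have hrpos : 0 < r := by
      have : (0:ℝ) ≤ t * D := by positivity
      simp only [hr]; linarith
    have hrne : r ≠ 0 := ne_of_gt hrpos
    set σ' : Matrix (Fin D) (Fin D) ℂ :=
      ((r⁻¹ : ℝ) : ℂ) • (((1 + s : ℝ) : ℂ) • σ + (t : ℂ) • 1) with hσ'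
    have hmem : s + t * D ∈ S ρ := by
      refine ⟨by positivity, σ', ⟨⟨⟨?_, ?_⟩, ?_⟩, ?_⟩⟩
      · exact smul_psd ((smul_psd hσpos (by linarith)).add (smul_psd Matrix.PosSemidef.one ht))
          (by positivity)
      · rw [hσ', Matrix.trace_smul, Matrix.trace_add, Matrix.trace_smul, Matrix.trace_smul,
          hσtr, Matrix.trace_one]
        simp only [Fintype.card_fin, smul_eq_mul, mul_one]
        rw [show ((r⁻¹ : ℝ) : ℂ) * ((((1:ℝ) + s : ℝ) : ℂ) + (t : ℂ) * (D : ℂ)) =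
            (((r⁻¹ * (1 + s + t * D) : ℝ)) : ℂ) by push_cast; ring]
        rw [inv_mul_cancel₀ hrne]
        norm_num
      · refine ⟨fun i => r⁻¹ * ((1 + s) * d i + t), ?_⟩
        rw [hσ', hσd]
        ext i j
        rcases eq_or_ne i j with rfl | hij
        · simp only [Matrix.diagonal_apply_eq, Matrix.add_apply, Matrix.smul_apply,
            Matrix.one_apply_eq, smul_eq_mul, mul_one]
          push_cast; ring
        · simp [Matrix.diagonal_apply_ne _ hij, Matrix.one_apply_ne hij]
      · have hsc : (1 + ((s + t * D : ℝ) : ℂ)) = ((r : ℝ) : ℂ) := by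
          simp only [hr]; push_cast; ring
        rw [hsc, hσ', smul_smul, show ((r : ℝ) : ℂ) * ((r⁻¹ : ℝ) : ℂ) = 1 by
          push_cast; field_simp, one_smul]
        have heq : (((1 + s : ℝ) : ℂ) • σ + (t : ℂ) • 1) - ρ =
            ((1 + (s : ℂ)) • σ - τ) + ((t : ℂ) • 1 - (ρ - τ)) := by
          rw [show (((1 + s : ℝ) : ℂ)) = 1 + (s : ℂ) by push_cast; ring]
          abel
        rw [heq]
        exact hσpsd.add hpsd
    have := csInf_le (bddBelow_S ρ) hmem
    linarith
  have := le_csInf hne h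
  linarith

end RobustnessAux

/-- The normalized robustness of coherence is continuous: for
`D`-dimensional density matrices `ρ` and `τ` with `‖ρ − τ‖₁ < δ` (trace norm,
i.e. sum of absolute values of eigenvalues) where `δ = ((D−1)/D)·ε`, we have
`|C_R(ρ) − C_R(τ)| < ε`. -/
theorem robustness_of_coherence_continuous {D : ℕ} (hD : 2 ≤ D)
    (ρ τ : Matrix (Fin D) (Fin D) ℂ) (hρ : IsDensity ρ) (hτ : IsDensity τ)
    (ε δ : ℝ) (hε : 0 < ε) (hδ : δ = (((D : ℝ) - 1) / D) * ε)
    (htr : (∑ i, |(hρ.1.1.sub hτ.1.1).eigenvalues i|) < δ) :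
    |CR ρ - CR τ| < ε := by
  classical
  set hΔ : (ρ - τ).IsHermitian := hρ.1.1.sub hτ.1.1
  set t : ℝ := ∑ i, |hΔ.eigenvalues i| with htdef
  have ht : 0 ≤ t := Finset.sum_nonneg fun i _ => abs_nonneg _
  have hbound : ∀ i, |hΔ.eigenvalues i| ≤ t := by
    intro i
    rw [htdef]
    exact Finset.single_le_sum (f := fun j => |hΔ.eigenvalues j|) (fun j _ => abs_nonneg _)
      (Finset.mem_univ i)
  have hpsd1 : ((t : ℂ) • 1 - (ρ - τ)).PosSemidef :=
    RobustnessAux.herm_le_smul_one hΔ fun i => (abs_le.mp (hbound i)).2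
  have hpsd2 : ((t : ℂ) • 1 - (τ - ρ)).PosSemidef := by
    rw [show ((t : ℂ) • 1 - (τ - ρ)) = ((t : ℂ) • 1 + (ρ - τ)) by abel]
    exact RobustnessAux.herm_add_smul_one hΔ fun i => (abs_le.mp (hbound i)).1
  have h1 := RobustnessAux.key_ineq hD ρ τ hρ hτ t ht hpsd1
  have h2 := RobustnessAux.key_ineq hD τ ρ hτ hρ t ht hpsd2
  have hSρ : CR ρ = (1 / ((D : ℝ) - 1)) * sInf (RobustnessAux.S ρ) := rfl
  have hSτ : CR τ = (1 / ((D : ℝ) - 1)) * sInf (RobustnessAux.S τ) := rfl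
  have hD2 : (2:ℝ) ≤ (D:ℝ) := by exact_mod_cast hD
  have hDpos : (0:ℝ) < (D:ℝ) := by linarith
  have hD1 : (0:ℝ) < (D:ℝ) - 1 := by linarith
  have habs : |sInf (RobustnessAux.S ρ) - sInf (RobustnessAux.S τ)| ≤ t * D :=
    abs_sub_le_iff.mpr ⟨by linarith, by linarith⟩
  rw [hSρ, hSτ, ← mul_sub, abs_mul, abs_of_pos (by positivity : (0:ℝ) < 1 / ((D:ℝ) - 1))]
  have htδ : t < δ := htr
  calc 1 / ((D:ℝ) - 1) * |sInf (RobustnessAux.S ρ) - sInf (RobustnessAux.S τ)|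
      ≤ 1 / ((D:ℝ) - 1) * (t * D) := by
        apply mul_le_mul_of_nonneg_left habs (by positivity)
    _ < 1 / ((D:ℝ) - 1) * (δ * D) := by
        apply mul_lt_mul_of_pos_left _ (by positivity)
        exact mul_lt_mul_of_pos_right htδ hDpos
    _ = ε := by rw [hδ]; field_simp
end

section
/- Let ρ be a density matrix, s* ≥ 0, σ* an incoherent (diagonal) state with ρ ≤ (1+s*)σ*, and τ a density matrix with τ − ρ ≤ δ·𝟙 for some δ ≥ 0. Then τ ≤ ((1+s*) + δD)·σ' where σ' = ((1+s*)σ* + δ𝟙)/((1+s*)+δD) is a normalized incoherent state. Consequently the robustness of coherence satisfies C_R(τ) ≤ C_R(ρ) + δD/(D−1) whenever C_R(ρ) = s*/(D−1). -/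
open scoped ComplexOrder

lemma psd_add {n : ℕ} {M N : Matrix (Fin n) (Fin n) ℂ}
    (hM : M.PosSemidef) (hN : N.PosSemidef) : (M + N).PosSemidef := by
  refine ⟨hM.1.add hN.1, fun x => ?_⟩
  simpa [mul_add, add_mul] using add_nonneg (hM.2 x) (hN.2 x)

lemma psd_smul {n : ℕ} {c : ℝ} (hc : 0 ≤ c) {M : Matrix (Fin n) (Fin n) ℂ}
    (hM : M.PosSemidef) : ((c : ℂ) • M).PosSemidef := by
  refine ⟨?_, fun x => ?_⟩
  · unfold Matrix.IsHermitian
    rw [Matrix.conjTranspose_smul, hM.1]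
    norm_num
  · exact (hM.smul (a := (c : ℂ)) (by exact_mod_cast hc)).2 x


/-- Let `ρ` be a density matrix, `s* ≥ 0`, `σ*` an incoherent state
with `ρ ≤ (1+s*)σ*`, and `τ` a density matrix with `τ − ρ ≤ δ·𝟙` for some `δ ≥ 0`.
Then `τ ≤ ((1+s*) + δD)·σ'` where `σ' = ((1+s*)σ* + δ𝟙)/((1+s*)+δD)` is a
normalized incoherent state; consequently `C_R(τ) ≤ C_R(ρ) + δD/(D−1)` whenever
`C_R(ρ) = s*/(D−1)`. -/
theorem robustness_perturbation_bound {D : ℕ} (hD : 2 ≤ D)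
    (ρ τ σstar : Matrix (Fin D) (Fin D) ℂ)
    (hρ : IsDensity ρ) (hτ : IsDensity τ) (hσ : IsIncoherent σstar)
    (sstar : ℝ) (hs : 0 ≤ sstar)
    (hle : ((1 + sstar : ℂ) • σstar - ρ).PosSemidef)
    (δ : ℝ) (hδ : 0 ≤ δ)
    (hτρ : ((δ : ℂ) • (1 : Matrix (Fin D) (Fin D) ℂ) - (τ - ρ)).PosSemidef)
    (hCρ : CR ρ = sstar / ((D : ℝ) - 1)) :
    IsIncoherent ((((1 + sstar) + δ * D : ℂ))⁻¹ •
        ((1 + sstar : ℂ) • σstar + (δ : ℂ) • (1 : Matrix (Fin D) (Fin D) ℂ))) ∧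
    (((1 + sstar : ℂ) • σstar + (δ : ℂ) • (1 : Matrix (Fin D) (Fin D) ℂ)) - τ).PosSemidef ∧
    CR τ ≤ CR ρ + δ * D / ((D : ℝ) - 1) := by
  set M : Matrix (Fin D) (Fin D) ℂ :=
    (1 + sstar : ℂ) • σstar + (δ : ℂ) • (1 : Matrix (Fin D) (Fin D) ℂ) with hM
  have hcpos : (0 : ℝ) < (1 + sstar) + δ * D := by positivity
  have hcast : (((1 + sstar) + δ * D : ℝ) : ℂ) = ((1 + sstar) + δ * D : ℂ) := by
    push_cast; ring
  have hcne : ((1 + sstar) + δ * D : ℂ) ≠ 0 := by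
    rw [← hcast]
    exact_mod_cast (ne_of_gt hcpos)
  -- M is PSD
  have hMpsd : M.PosSemidef := by
    refine psd_add ?_ ?_
    · have := psd_smul (c := 1 + sstar) (by linarith) hσ.1.1
      simpa using this
    · exact psd_smul hδ Matrix.PosSemidef.one
  -- Part 2 : M - τ is PSD
  have h2 : (M - τ).PosSemidef := by
    have heq : M - τ = ((1 + sstar : ℂ) • σstar - ρ) +
        ((δ : ℂ) • (1 : Matrix (Fin D) (Fin D) ℂ) - (τ - ρ)) := by
      simp only [hM]; abel
    rw [heq]
    exact psd_add hle hτρ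
  -- Part 1 : incoherence of normalized M
  have h1 : IsIncoherent ((((1 + sstar) + δ * D : ℂ))⁻¹ • M) := by
    refine ⟨⟨?_, ?_⟩, ?_⟩
    · have : (((((1 + sstar) + δ * D : ℝ))⁻¹ : ℝ) : ℂ) • M
          = (((1 + sstar) + δ * D : ℂ))⁻¹ • M := by
        rw [← hcast]; push_cast; ring_nf
      rw [← this]
      exact psd_smul (by positivity) hMpsd
    · rw [Matrix.trace_smul, hM, Matrix.trace_add, Matrix.trace_smul, Matrix.trace_smul,
        hσ.1.2, Matrix.trace_one]
      simp only [Fintype.card_fin, smul_eq_mul, mul_one]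
      rw [inv_mul_eq_one₀ hcne]
    · obtain ⟨d, hd⟩ := hσ.2
      refine ⟨fun i => ((1 + sstar) + δ * D)⁻¹ * ((1 + sstar) * d i + δ), ?_⟩
      rw [hM, hd]
      ext i j
      simp only [Matrix.smul_apply, Matrix.add_apply, Matrix.diagonal_apply, Matrix.one_apply,
        smul_eq_mul]
      by_cases hij : i = j <;> simp [hij] <;> push_cast <;> ring
  refine ⟨h1, h2, ?_⟩
  -- Part 3
  have hmem : sstar + δ * D ∈
      {s : ℝ | 0 ≤ s ∧ ∃ σ, IsIncoherent σ ∧ ((1 + s : ℂ) • σ - τ).PosSemidef} := by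
    refine ⟨by positivity, (((1 + sstar) + δ * D : ℂ))⁻¹ • M, h1, ?_⟩
    have : (1 + (sstar + δ * D : ℝ) : ℂ) • ((((1 + sstar) + δ * D : ℂ))⁻¹ • M) = M := by
      rw [smul_smul]
      have h1s : (1 + (sstar + δ * D : ℝ) : ℂ) = ((1 + sstar) + δ * D : ℂ) := by
        push_cast; ring
      rw [h1s, mul_inv_cancel₀ hcne, one_smul]
    rw [this]
    exact h2
  have hbdd : BddBelow {s : ℝ | 0 ≤ s ∧ ∃ σ, IsIncoherent σ ∧
      ((1 + s : ℂ) • σ - τ).PosSemidef} := ⟨0, fun s hs => hs.1⟩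
  have hinf := csInf_le hbdd hmem
  have hD1 : (0 : ℝ) < (D : ℝ) - 1 := by
    have : (2 : ℝ) ≤ D := by exact_mod_cast hD
    linarith
  rw [hCρ]
  unfold CR
  have heq : sstar / ((D : ℝ) - 1) + δ * D / ((D : ℝ) - 1)
      = 1 / ((D : ℝ) - 1) * (sstar + δ * D) := by ring
  rw [heq]
  have hpos : (0 : ℝ) ≤ 1 / ((D : ℝ) - 1) := by positivity
  exact mul_le_mul_of_nonneg_left hinf hpos
end

section
/- For a single-qubit state ρ = (1/2)(𝟙 + v_x σ_x + v_y σ_y + v_z σ_z), the robustness of coherence with respect to the computational basis equals C(ρ) = √(v_x² + v_y²) = |ρ_{01}| + |ρ_{10}|, i.e., it equals the l₁-norm of the off-diagonal elements. -/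
open scoped ComplexOrder
open Complex

/-- The Pauli matrix `σ_x`. -/
def pauliX : Matrix (Fin 2) (Fin 2) ℂ := !![0, 1; 1, 0]

/-- The Pauli matrix `σ_y`. -/
def pauliY : Matrix (Fin 2) (Fin 2) ℂ := !![0, -I; I, 0]

/-- The Pauli matrix `σ_z`. -/
def pauliZ : Matrix (Fin 2) (Fin 2) ℂ := !![1, 0; 0, -1]

/-- The normalized robustness of coherence of a qubit state with respect to the
computational basis (for `D = 2` the normalization factor is `1/(2−1) = 1`):
`C(ρ) = inf{s ≥ 0 : ∃ diagonal state σ, ρ ≤ (1+s)σ}`. -/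
noncomputable def CRqubit (ρ : Matrix (Fin 2) (Fin 2) ℂ) : ℝ :=
  sInf {s : ℝ | 0 ≤ s ∧ ∃ d : Fin 2 → ℝ, (∀ i, 0 ≤ d i) ∧ (∑ i, d i) = 1 ∧
    ((1 + s : ℂ) • Matrix.diagonal (fun i => (d i : ℂ)) - ρ).PosSemidef}

/-- A `2×2` Hermitian-form matrix with real diagonal which is PSD has nonnegative diagonal
and determinant. -/
theorem psd2 {a b : ℝ} {c : ℂ} (h : (!![(a:ℂ), c; (starRingEnd ℂ) c, b]).PosSemidef) :
    0 ≤ a ∧ 0 ≤ b ∧ Complex.normSq c ≤ a * b := by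
  have h0 := h.dotProduct_mulVec_nonneg ![1, 0]
  have h1 := h.dotProduct_mulVec_nonneg ![0, 1]
  simp [Matrix.mulVec, dotProduct, Fin.sum_univ_two] at h0 h1
  refine ⟨h0, h1, ?_⟩
  have hq : ∀ n : ℝ, 0 ≤ a * Complex.normSq c * (n * n) + (-2 * Complex.normSq c) * n + b := by
    intro n
    have h2 := h.dotProduct_mulVec_nonneg ![(n : ℂ) * c, -1]
    simp [Matrix.mulVec, dotProduct, Fin.sum_univ_two] at h2
    have key : ((a * Complex.normSq c * (n * n) + (-2 * Complex.normSq c) * n + b : ℝ) : ℂ) =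
        ↑n * (starRingEnd ℂ) c * (↑a * (↑n * c) + -c) + (↑b + -((starRingEnd ℂ) c * (↑n * c))) := by
      push_cast
      linear_combination ((2:ℂ) * n - (a : ℂ) * n ^ 2) * Complex.mul_conj c
    rw [← Complex.zero_le_real, key]
    exact h2
  have hd := discrim_le_zero hq
  rw [discrim] at hd
  rcases eq_or_lt_of_le (Complex.normSq_nonneg c) with h' | h'
  · nlinarith
  · nlinarith

/-- Converse: nonnegative real diagonal plus determinant condition implies PSD. -/
theorem psd2' {a b : ℝ} {c : ℂ} (ha : 0 ≤ a) (hb : 0 ≤ b)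
    (hc : Complex.normSq c ≤ a * b) : (!![(a:ℂ), c; (starRingEnd ℂ) c, b]).PosSemidef := by
  refine Matrix.PosSemidef.of_dotProduct_mulVec_nonneg ?_ ?_
  · rw [Matrix.IsHermitian]
    ext i j
    fin_cases i <;> fin_cases j <;>
      simp [Matrix.conjTranspose_apply, Complex.conj_ofReal]
  · intro x
    have key : (starRingEnd ℂ) (x 0) * (↑a * x 0 + c * x 1) +
        (starRingEnd ℂ) (x 1) * ((starRingEnd ℂ) c * x 0 + ↑b * x 1) =
        ((a * Complex.normSq (x 0) + b * Complex.normSq (x 1)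
          + 2 * (c * (starRingEnd ℂ) (x 0) * x 1).re : ℝ) : ℂ) := by
      have e0 : (starRingEnd ℂ) (x 0) * x 0 = ((Complex.normSq (x 0) : ℝ) : ℂ) :=
        (Complex.normSq_eq_conj_mul_self).symm
      have e1 : (starRingEnd ℂ) (x 1) * x 1 = ((Complex.normSq (x 1) : ℝ) : ℂ) :=
        (Complex.normSq_eq_conj_mul_self).symm
      have e2 := Complex.add_conj (c * (starRingEnd ℂ) (x 0) * x 1)
      have e3 : (starRingEnd ℂ) (c * (starRingEnd ℂ) (x 0) * x 1) =
          (starRingEnd ℂ) c * x 0 * (starRingEnd ℂ) (x 1) := by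
        simp only [map_mul, Complex.conj_conj]
      push_cast at e2 ⊢
      linear_combination (a : ℂ) * e0 + (b : ℂ) * e1 + e2 - e3
    have hre : 0 ≤ a * Complex.normSq (x 0) + b * Complex.normSq (x 1)
        + 2 * (c * (starRingEnd ℂ) (x 0) * x 1).re := by
      set z := c * (starRingEnd ℂ) (x 0) * x 1 with hz
      have habs : ‖z‖ = ‖c‖ * ‖x 0‖ * ‖x 1‖ := by
        simp [hz, map_mul]
      have h1 : -(‖c‖ * ‖x 0‖ * ‖x 1‖) ≤ z.re := by
        rw [← habs]; exact (abs_le.1 (Complex.abs_re_le_norm z)).1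
      have hab : ‖c‖ ≤ Real.sqrt a * Real.sqrt b := by
        rw [← Real.sqrt_mul ha b, ← Real.sqrt_sq (norm_nonneg c)]
        exact Real.sqrt_le_sqrt (by rw [Complex.sq_norm]; exact hc)
      have hn0 : Complex.normSq (x 0) = ‖x 0‖ ^ 2 := (Complex.sq_norm _).symm
      have hn1 : Complex.normSq (x 1) = ‖x 1‖ ^ 2 := (Complex.sq_norm _).symm
      nlinarith [sq_nonneg (Real.sqrt a * ‖x 0‖ - Real.sqrt b * ‖x 1‖),
        Real.sq_sqrt ha, Real.sq_sqrt hb, Real.sqrt_nonneg a, Real.sqrt_nonneg b,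
        norm_nonneg (x 0), norm_nonneg (x 1),
        mul_nonneg (norm_nonneg (x 0)) (norm_nonneg (x 1))]
    calc (0:ℂ) ≤ ((a * Complex.normSq (x 0) + b * Complex.normSq (x 1)
          + 2 * (c * (starRingEnd ℂ) (x 0) * x 1).re : ℝ) : ℂ) := by
            rwa [Complex.zero_le_real]
      _ = _ := by
            rw [← key]
            simp [Matrix.mulVec, dotProduct, Fin.sum_univ_two]
            try ring

set_option maxHeartbeats 1000000 in
/-- For a single-qubit state `ρ = ½(𝟙 + v_x σ_x + v_y σ_y + v_z σ_z)`,
the robustness of coherence with respect to the computational basis equals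
`√(v_x² + v_y²) = |ρ₀₁| + |ρ₁₀|`, the `l₁`-norm of the off-diagonal elements. -/
theorem qubit_robustness_eq (vx vy vz : ℝ) (hv : vx ^ 2 + vy ^ 2 + vz ^ 2 ≤ 1)
    (ρ : Matrix (Fin 2) (Fin 2) ℂ)
    (hρ : ρ = (1 / 2 : ℂ) • ((1 : Matrix (Fin 2) (Fin 2) ℂ)
      + (vx : ℂ) • pauliX + (vy : ℂ) • pauliY + (vz : ℂ) • pauliZ)) :
    CRqubit ρ = Real.sqrt (vx ^ 2 + vy ^ 2) ∧
    Real.sqrt (vx ^ 2 + vy ^ 2) = ‖ρ 0 1‖ + ‖ρ 1 0‖ := by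
  set r := Real.sqrt (vx ^ 2 + vy ^ 2) with hrdef
  have hr0 : 0 ≤ r := Real.sqrt_nonneg _
  have hr2 : r ^ 2 = vx ^ 2 + vy ^ 2 := Real.sq_sqrt (by positivity)
  have hE : ρ = !![((1:ℂ) + vz)/2, ((vx:ℂ) - vy*I)/2;
      ((vx:ℂ) + vy*I)/2, ((1:ℂ) - vz)/2] := by
    subst hρ
    ext i j
    fin_cases i <;> fin_cases j <;>
      simp [pauliX, pauliY, pauliZ, Matrix.one_apply] <;> ring
  have hvz : vz ^ 2 ≤ 1 := by nlinarith [sq_nonneg vx, sq_nonneg vy]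
  have hvz1 : -1 ≤ vz ∧ vz ≤ 1 := abs_le.1 (abs_le_one_iff_mul_self_le_one.2 (by nlinarith))
  have hcconj : (starRingEnd ℂ) ((-(vx:ℂ) + vy*I)/2) = (-(vx:ℂ) - vy*I)/2 := by
    simp [map_div₀, map_ofNat]
    ring
  have hcnsq : Complex.normSq ((-(vx:ℂ) + vy*I)/2) = (vx^2 + vy^2)/4 := by
    simp [Complex.normSq_apply]
    ring
  have h1r : (1:ℝ) + r ≠ 0 := by positivity
  have hleast : IsLeast {s : ℝ | 0 ≤ s ∧ ∃ d : Fin 2 → ℝ, (∀ i, 0 ≤ d i) ∧ (∑ i, d i) = 1 ∧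
      ((1 + s : ℂ) • Matrix.diagonal (fun i => (d i : ℂ)) - ρ).PosSemidef} r := by
    constructor
    · refine ⟨hr0, ![((1+vz)/2 + r/2)/(1+r), ((1-vz)/2 + r/2)/(1+r)], ?_, ?_, ?_⟩
      · intro i
        fin_cases i
        · exact div_nonneg (by linarith [hvz1.1, hvz1.2]) (by positivity)
        · exact div_nonneg (by linarith [hvz1.1, hvz1.2]) (by positivity)
      · rw [Fin.sum_univ_two]
        simp only [Matrix.cons_val_zero, Matrix.cons_val_one, Matrix.head_cons]
        field_simp
        ring
      · have hM : (1 + (r:ℂ)) • Matrix.diagonal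
            (fun i => ((![((1+vz)/2 + r/2)/(1+r), ((1-vz)/2 + r/2)/(1+r)] : Fin 2 → ℝ) i : ℂ)) - ρ
            = !![((r/2 : ℝ):ℂ), (-(vx:ℂ) + vy*I)/2;
                (starRingEnd ℂ) ((-(vx:ℂ) + vy*I)/2), ((r/2 : ℝ):ℂ)] := by
          rw [hE, hcconj]
          ext i j
          fin_cases i <;> fin_cases j <;>
            · simp [Matrix.diagonal]
              field_simp
              ring
        rw [hM]
        exact psd2' (by positivity) (by positivity) (by rw [hcnsq]; nlinarith)
    · rintro s ⟨hs0, d, hd0, hdsum, hpsd⟩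
      obtain ⟨A, hA⟩ : ∃ x : ℝ, x = (1+s) * d 0 - (1+vz)/2 := ⟨_, rfl⟩
      obtain ⟨B, hB⟩ : ∃ x : ℝ, x = (1+s) * d 1 - (1-vz)/2 := ⟨_, rfl⟩
      have hM : (1 + (s:ℂ)) • Matrix.diagonal (fun i => (d i : ℂ)) - ρ
          = !![((A : ℝ):ℂ), (-(vx:ℂ) + vy*I)/2;
              (starRingEnd ℂ) ((-(vx:ℂ) + vy*I)/2), ((B : ℝ):ℂ)] := by
        rw [hE, hcconj]
        ext i j
        fin_cases i <;> fin_cases j <;>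
          · simp [Matrix.diagonal, hA, hB]
            try push_cast
            try ring
      rw [hM] at hpsd
      obtain ⟨hA0, hB0, hAB⟩ := psd2 hpsd
      rw [hcnsq] at hAB
      have hsum : A + B = s := by
        rw [Fin.sum_univ_two] at hdsum
        rw [hA, hB]; nlinarith [hdsum]
      have h4 : r ^ 2 ≤ (A + B) ^ 2 := by nlinarith [sq_nonneg (A - B)]
      rw [hsum] at h4
      calc r = Real.sqrt (r ^ 2) := (Real.sqrt_sq hr0).symm
        _ ≤ Real.sqrt (s ^ 2) := Real.sqrt_le_sqrt h4
        _ = s := Real.sqrt_sq hs0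
  have h1 : CRqubit ρ = r := by
    rw [CRqubit]
    exact hleast.csInf_eq
  refine ⟨h1, ?_⟩
  have e01 : ρ 0 1 = ((vx:ℂ) - vy*I)/2 := by rw [hE]; simp
  have e10 : ρ 1 0 = ((vx:ℂ) + vy*I)/2 := by rw [hE]; simp
  have n1 : ‖((vx:ℂ) - vy*I)‖ = r := by
    rw [hrdef, Complex.norm_def]
    congr 1
    simp [Complex.normSq_apply]
    ring
  have n2 : ‖((vx:ℂ) + vy*I)‖ = r := by
    rw [hrdef, Complex.norm_def]
    congr 1
    simp [Complex.normSq_apply]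
    ring
  rw [e01, e10, norm_div, norm_div, n1, n2]
  norm_num
  try ring
end

section
/- A single-qubit channel with Bloch representation v ↦ Λv + κ, where Λ = diag(λ₁,λ₂,λ₃), is completely positive if and only if its Choi matrix ρ_M is positive semidefinite, which (by Descartes's rule of signs applied to the characteristic polynomial) is equivalent to the three inequalities: |κ|² + |λ|² ≤ 3; |κ|² + |λ|² − 2λ₁λ₂λ₃ ≤ 1; and (1−|κ|²)² − 2(1−|κ|²)|λ|² − ½|λ|⁴ + 8λ₁λ₂λ₃ + ½Σᵢ Dᵢ² − 4K·L ≥ 0, where Dᵢ = Σⱼ (−1)^{δᵢⱼ} λⱼ², K = (κ₁²,κ₂²,κ₃²), L = (λ₁²,λ₂²,λ₃²). -/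
open Matrix Complex Kronecker
open scoped ComplexOrder

/-- The single-qubit linear map whose action on Bloch vectors is
`v ↦ Λv + κ` with `Λ = diag(λ₁,λ₂,λ₃)`, extended linearly to all `2×2` matrices:
`M(A) = ½[Tr(A)(𝟙 + κ·σ) + Σᵢ λᵢ Tr(σᵢA) σᵢ]`. -/
noncomputable def blochMap (l1 l2 l3 k1 k2 k3 : ℝ) (A : Matrix (Fin 2) (Fin 2) ℂ) :
    Matrix (Fin 2) (Fin 2) ℂ :=
  (1 / 2 : ℂ) • (A.trace • ((1 : Matrix (Fin 2) (Fin 2) ℂ)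
      + (k1 : ℂ) • pauliX + (k2 : ℂ) • pauliY + (k3 : ℂ) • pauliZ)
    + ((l1 : ℂ) * (pauliX * A).trace) • pauliX
    + ((l2 : ℂ) * (pauliY * A).trace) • pauliY
    + ((l3 : ℂ) * (pauliZ * A).trace) • pauliZ)

/-- Complete positivity of a map on `2×2` matrices: every extension
`id_n ⊗ M` maps positive semidefinite matrices to positive semidefinite ones. -/
def IsCompletelyPositive (M : Matrix (Fin 2) (Fin 2) ℂ → Matrix (Fin 2) (Fin 2) ℂ) : Prop :=
  ∀ (n : ℕ) (ρ : Matrix (Fin n × Fin 2) (Fin n × Fin 2) ℂ), ρ.PosSemidef →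
    (Matrix.of fun (p q : Fin n × Fin 2) =>
      (M (Matrix.of fun k l => ρ (p.1, k) (q.1, l))) p.2 q.2).PosSemidef

/-- The Choi matrix `ρ_M = (𝟙⊗M)(|φ⁺⟩⟨φ⁺|)
= ¼[𝟙⊗(𝟙 + κ·σ) + Σᵢ λᵢ σᵢᵀ⊗σᵢ]` of the Bloch map. -/
noncomputable def choiBloch (l1 l2 l3 k1 k2 k3 : ℝ) :
    Matrix (Fin 2 × Fin 2) (Fin 2 × Fin 2) ℂ :=
  (1 / 4 : ℂ) • ((1 : Matrix (Fin 2) (Fin 2) ℂ) ⊗ₖ ((1 : Matrix (Fin 2) (Fin 2) ℂ)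
      + (k1 : ℂ) • pauliX + (k2 : ℂ) • pauliY + (k3 : ℂ) • pauliZ)
    + (l1 : ℂ) • (pauliXᵀ ⊗ₖ pauliX)
    + (l2 : ℂ) • (pauliYᵀ ⊗ₖ pauliY)
    + (l3 : ℂ) • (pauliZᵀ ⊗ₖ pauliZ))

noncomputable def Xmat (l1 l2 l3 k1 k2 k3 : ℝ) : Matrix (Fin 4) (Fin 4) ℂ :=
  !![1 + k3 + l3, k1 - I * k2, 0, l1 + l2;
     k1 + I * k2, 1 - k3 - l3, l1 - l2, 0;
     0, l1 - l2, 1 + k3 - l3, k1 - I * k2;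
     l1 + l2, 0, k1 + I * k2, 1 - k3 + l3]

def e4 : Fin 2 × Fin 2 ≃ Fin 4 := finProdFinEquiv.trans (finCongr (by norm_num))

lemma choi_eq (l1 l2 l3 k1 k2 k3 : ℝ) :
    choiBloch l1 l2 l3 k1 k2 k3
      = (1 / 4 : ℂ) • ((Xmat l1 l2 l3 k1 k2 k3).submatrix e4 e4) := by
  ext p q
  fin_cases p <;> fin_cases q <;>
    simp [choiBloch, Xmat, e4, pauliX, pauliY, pauliZ, Matrix.one_apply, finProdFinEquiv,
      Matrix.transpose_apply, Matrix.vecHead, Matrix.vecTail, Complex.I_mul_I] <;>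
    ring


lemma trace_pow_eq_sum_eig {n : Type*} [Fintype n] [DecidableEq n] {A : Matrix n n ℂ}
    (hA : A.IsHermitian) (m : ℕ) :
    (A ^ m).trace = ∑ i, ((hA.eigenvalues i : ℂ)) ^ m := by
  set U : Matrix n n ℂ := (hA.eigenvectorUnitary : Matrix n n ℂ) with hUdef
  set D : Matrix n n ℂ := diagonal (RCLike.ofReal ∘ hA.eigenvalues) with hDdef
  have hU : star U * U = 1 := Matrix.UnitaryGroup.star_mul_self _
  have key : ∀ k : ℕ, (U * D * star U) ^ (k + 1) = U * D ^ (k + 1) * star U := by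
    intro k
    induction k with
    | zero => simp [pow_one]
    | succ k ih =>
        rw [pow_succ, ih]
        calc U * D ^ (k + 1) * star U * (U * D * star U)
            = U * D ^ (k + 1) * (star U * U) * D * star U := by
              simp only [Matrix.mul_assoc]
          _ = U * D ^ (k + 2) * star U := by
              rw [hU, Matrix.mul_one]
              simp only [Matrix.mul_assoc, ← pow_succ]
  cases m with
  | zero => simp
  | succ m =>
      conv_lhs => rw [hA.spectral_theorem, Unitary.conjStarAlgAut_apply]
      rw [key m, Matrix.trace_mul_cycle, hU, Matrix.one_mul,
        hDdef, Matrix.diagonal_pow, Matrix.trace_diagonal]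
      simp [RCLike.ofReal]


lemma root_nonneg_aux (t e2 e3 e4 : ℝ) (ht : t ^ 4 - t ^ 3 + e2 * t ^ 2 - e3 * t + e4 = 0)
    (h2 : 0 ≤ e2) (h3 : 0 ≤ e3) (h4 : 0 ≤ e4) : 0 ≤ t := by
  by_contra h
  push_neg at h
  nlinarith [mul_nonneg h2 (sq_nonneg t), mul_nonneg h3 (neg_nonneg.2 h.le),
    pow_pos (neg_pos.2 h) 4, pow_pos (neg_pos.2 h) 3]

lemma quartic_nonneg_iff (a b c d : ℝ) (h1 : a + b + c + d = 1) :
    (0 ≤ a ∧ 0 ≤ b ∧ 0 ≤ c ∧ 0 ≤ d) ↔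
      (0 ≤ a*b + a*c + a*d + b*c + b*d + c*d ∧
       0 ≤ a*b*c + a*b*d + a*c*d + b*c*d ∧ 0 ≤ a*b*c*d) := by
  constructor
  · rintro ⟨ha, hb, hc, hd⟩
    refine ⟨by positivity, by positivity, by positivity⟩
  · rintro ⟨h2, h3, h4⟩
    refine ⟨?_, ?_, ?_, ?_⟩
    · exact root_nonneg_aux a _ _ _ (by linear_combination a ^ 3 * h1) h2 h3 h4
    · exact root_nonneg_aux b _ _ _ (by linear_combination b ^ 3 * h1) h2 h3 h4
    · exact root_nonneg_aux c _ _ _ (by linear_combination c ^ 3 * h1) h2 h3 h4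
    · exact root_nonneg_aux d _ _ _ (by linear_combination d ^ 3 * h1) h2 h3 h4

variable (l1 l2 l3 k1 k2 k3 : ℝ)

lemma XH : (Xmat l1 l2 l3 k1 k2 k3).IsHermitian := by
  rw [Matrix.IsHermitian]
  ext i j
  fin_cases i <;> fin_cases j <;>
    simp [Xmat, Matrix.conjTranspose_apply] <;> ring

lemma Xtr : (Xmat l1 l2 l3 k1 k2 k3).trace = 4 := by
  simp [Matrix.trace, Fin.sum_univ_four, Xmat]
  ring

lemma Xtr2 : ((Xmat l1 l2 l3 k1 k2 k3) * (Xmat l1 l2 l3 k1 k2 k3)).trace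
    = ((4 * (1 + (k1^2+k2^2+k3^2) + (l1^2+l2^2+l3^2)) : ℝ) : ℂ) := by
  simp [Matrix.trace, Fin.sum_univ_four, Matrix.mul_apply, Xmat]
  push_cast
  ring_nf
  simp [Complex.I_sq]


set_option maxHeartbeats 1000000 in
lemma Xtr3 : ((Xmat l1 l2 l3 k1 k2 k3) * (Xmat l1 l2 l3 k1 k2 k3) * (Xmat l1 l2 l3 k1 k2 k3)).trace
    = ((4 * (1 + 3*(k1^2+k2^2+k3^2) + 3*(l1^2+l2^2+l3^2) + 6*(l1*l2*l3)) : ℝ) : ℂ) := by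
  simp [Matrix.trace, Fin.sum_univ_four, Matrix.mul_apply, Xmat]
  ring_nf
  simp [Complex.I_sq]

set_option maxHeartbeats 1000000 in
lemma Xdet : (Xmat l1 l2 l3 k1 k2 k3).det
    = (((1 - (k1 ^ 2 + k2 ^ 2 + k3 ^ 2)) ^ 2
         - 2 * (1 - (k1 ^ 2 + k2 ^ 2 + k3 ^ 2)) * (l1 ^ 2 + l2 ^ 2 + l3 ^ 2)
         - (1 / 2) * (l1 ^ 2 + l2 ^ 2 + l3 ^ 2) ^ 2
         + 8 * l1 * l2 * l3
         + (1 / 2) * ((-l1 ^ 2 + l2 ^ 2 + l3 ^ 2) ^ 2 + (l1 ^ 2 - l2 ^ 2 + l3 ^ 2) ^ 2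
             + (l1 ^ 2 + l2 ^ 2 - l3 ^ 2) ^ 2)
         - 4 * (k1 ^ 2 * l1 ^ 2 + k2 ^ 2 * l2 ^ 2 + k3 ^ 2 * l3 ^ 2) : ℝ) : ℂ) := by
  simp [Matrix.det_succ_row_zero, Fin.sum_univ_succ, Xmat, Fin.succAbove, Fin.castSucc,
    Fin.castAdd, Fin.castLE]
  ring_nf
  simp [Complex.I_sq]
  ring

lemma trace_submatrix_equiv' {m n R : Type*} [Fintype m] [Fintype n] [AddCommMonoid R]
    (e : m ≃ n) (A : Matrix n n R) : (A.submatrix e e).trace = A.trace :=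
  Fintype.sum_equiv e _ _ (fun _ => rfl)

variable (l1 l2 l3 k1 k2 k3 : ℝ)

lemma Ctrace1 : (choiBloch l1 l2 l3 k1 k2 k3).trace = 1 := by
  rw [choi_eq, Matrix.trace_smul, trace_submatrix_equiv', Xtr]
  norm_num

lemma Ctrace2 : ((choiBloch l1 l2 l3 k1 k2 k3) ^ 2).trace
    = (((1 + (k1^2+k2^2+k3^2) + (l1^2+l2^2+l3^2))/4 : ℝ) : ℂ) := by
  rw [pow_two, choi_eq, Matrix.smul_mul, Matrix.mul_smul, Matrix.submatrix_mul_equiv,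
    smul_smul, Matrix.trace_smul, trace_submatrix_equiv', Xtr2, smul_eq_mul]
  push_cast
  ring

lemma Ctrace3 : ((choiBloch l1 l2 l3 k1 k2 k3) ^ 3).trace
    = (((1 + 3*(k1^2+k2^2+k3^2) + 3*(l1^2+l2^2+l3^2) + 6*(l1*l2*l3))/16 : ℝ) : ℂ) := by
  have : (choiBloch l1 l2 l3 k1 k2 k3) ^ 3
      = (1 / 64 : ℂ) • (((Xmat l1 l2 l3 k1 k2 k3) * (Xmat l1 l2 l3 k1 k2 k3)
          * (Xmat l1 l2 l3 k1 k2 k3)).submatrix e4 e4) := by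
    rw [pow_succ, pow_two, choi_eq]
    simp only [Matrix.smul_mul, Matrix.mul_smul, smul_smul, Matrix.submatrix_mul_equiv]
    norm_num
  rw [this, Matrix.trace_smul, trace_submatrix_equiv', Xtr3, smul_eq_mul]
  push_cast
  ring

lemma Cdet : (choiBloch l1 l2 l3 k1 k2 k3).det
    = ((((1 - (k1 ^ 2 + k2 ^ 2 + k3 ^ 2)) ^ 2
         - 2 * (1 - (k1 ^ 2 + k2 ^ 2 + k3 ^ 2)) * (l1 ^ 2 + l2 ^ 2 + l3 ^ 2)
         - (1 / 2) * (l1 ^ 2 + l2 ^ 2 + l3 ^ 2) ^ 2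
         + 8 * l1 * l2 * l3
         + (1 / 2) * ((-l1 ^ 2 + l2 ^ 2 + l3 ^ 2) ^ 2 + (l1 ^ 2 - l2 ^ 2 + l3 ^ 2) ^ 2
             + (l1 ^ 2 + l2 ^ 2 - l3 ^ 2) ^ 2)
         - 4 * (k1 ^ 2 * l1 ^ 2 + k2 ^ 2 * l2 ^ 2 + k3 ^ 2 * l3 ^ 2)) / 256 : ℝ) : ℂ) := by
  rw [choi_eq, Matrix.det_smul, Matrix.det_submatrix_equiv_self, Xdet]
  push_cast
  norm_num
  ring

lemma choi_isHermitian : (choiBloch l1 l2 l3 k1 k2 k3).IsHermitian := by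
  rw [choi_eq, Matrix.IsHermitian, Matrix.conjTranspose_smul, Matrix.conjTranspose_submatrix,
    XH]
  norm_num

lemma psd_iff_ineqs :
    ((choiBloch l1 l2 l3 k1 k2 k3).PosSemidef ↔
      ((k1 ^ 2 + k2 ^ 2 + k3 ^ 2) + (l1 ^ 2 + l2 ^ 2 + l3 ^ 2) ≤ 3 ∧
       (k1 ^ 2 + k2 ^ 2 + k3 ^ 2) + (l1 ^ 2 + l2 ^ 2 + l3 ^ 2) - 2 * l1 * l2 * l3 ≤ 1 ∧
       (1 - (k1 ^ 2 + k2 ^ 2 + k3 ^ 2)) ^ 2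
         - 2 * (1 - (k1 ^ 2 + k2 ^ 2 + k3 ^ 2)) * (l1 ^ 2 + l2 ^ 2 + l3 ^ 2)
         - (1 / 2) * (l1 ^ 2 + l2 ^ 2 + l3 ^ 2) ^ 2
         + 8 * l1 * l2 * l3
         + (1 / 2) * ((-l1 ^ 2 + l2 ^ 2 + l3 ^ 2) ^ 2 + (l1 ^ 2 - l2 ^ 2 + l3 ^ 2) ^ 2
             + (l1 ^ 2 + l2 ^ 2 - l3 ^ 2) ^ 2)
         - 4 * (k1 ^ 2 * l1 ^ 2 + k2 ^ 2 * l2 ^ 2 + k3 ^ 2 * l3 ^ 2) ≥ 0)) := by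
  have hHerm := choi_isHermitian l1 l2 l3 k1 k2 k3
  have h1 : hHerm.eigenvalues (0,0) + hHerm.eigenvalues (0,1)
      + hHerm.eigenvalues (1,0) + hHerm.eigenvalues (1,1) = 1 := by
    have h := trace_pow_eq_sum_eig hHerm 1
    rw [pow_one, Ctrace1] at h
    simp only [pow_one, Fintype.sum_prod_type, Fin.sum_univ_two] at h
    exact_mod_cast (by push_cast; linear_combination -h :
      ((hHerm.eigenvalues (0,0) + hHerm.eigenvalues (0,1)
        + hHerm.eigenvalues (1,0) + hHerm.eigenvalues (1,1) : ℝ) : ℂ) = ((1 : ℝ) : ℂ))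
  have h2 : hHerm.eigenvalues (0,0)^2 + hHerm.eigenvalues (0,1)^2
      + hHerm.eigenvalues (1,0)^2 + hHerm.eigenvalues (1,1)^2
      = (1 + (k1^2+k2^2+k3^2) + (l1^2+l2^2+l3^2))/4 := by
    have h := trace_pow_eq_sum_eig hHerm 2
    rw [Ctrace2] at h
    push_cast at h
    simp only [Fintype.sum_prod_type, Fin.sum_univ_two] at h
    exact_mod_cast (by push_cast; linear_combination -h :
      ((hHerm.eigenvalues (0,0)^2 + hHerm.eigenvalues (0,1)^2
        + hHerm.eigenvalues (1,0)^2 + hHerm.eigenvalues (1,1)^2 : ℝ) : ℂ)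
        = (((1 + (k1^2+k2^2+k3^2) + (l1^2+l2^2+l3^2))/4 : ℝ) : ℂ))
  have h3 : hHerm.eigenvalues (0,0)^3 + hHerm.eigenvalues (0,1)^3
      + hHerm.eigenvalues (1,0)^3 + hHerm.eigenvalues (1,1)^3
      = (1 + 3*(k1^2+k2^2+k3^2) + 3*(l1^2+l2^2+l3^2) + 6*(l1*l2*l3))/16 := by
    have h := trace_pow_eq_sum_eig hHerm 3
    rw [Ctrace3] at h
    push_cast at h
    simp only [Fintype.sum_prod_type, Fin.sum_univ_two] at h
    exact_mod_cast (by push_cast; linear_combination -h :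
      ((hHerm.eigenvalues (0,0)^3 + hHerm.eigenvalues (0,1)^3
        + hHerm.eigenvalues (1,0)^3 + hHerm.eigenvalues (1,1)^3 : ℝ) : ℂ)
        = (((1 + 3*(k1^2+k2^2+k3^2) + 3*(l1^2+l2^2+l3^2) + 6*(l1*l2*l3))/16 : ℝ) : ℂ))
  have h4 : hHerm.eigenvalues (0,0) * hHerm.eigenvalues (0,1)
      * hHerm.eigenvalues (1,0) * hHerm.eigenvalues (1,1)
      = ((1 - (k1 ^ 2 + k2 ^ 2 + k3 ^ 2)) ^ 2
         - 2 * (1 - (k1 ^ 2 + k2 ^ 2 + k3 ^ 2)) * (l1 ^ 2 + l2 ^ 2 + l3 ^ 2)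
         - (1 / 2) * (l1 ^ 2 + l2 ^ 2 + l3 ^ 2) ^ 2
         + 8 * l1 * l2 * l3
         + (1 / 2) * ((-l1 ^ 2 + l2 ^ 2 + l3 ^ 2) ^ 2 + (l1 ^ 2 - l2 ^ 2 + l3 ^ 2) ^ 2
             + (l1 ^ 2 + l2 ^ 2 - l3 ^ 2) ^ 2)
         - 4 * (k1 ^ 2 * l1 ^ 2 + k2 ^ 2 * l2 ^ 2 + k3 ^ 2 * l3 ^ 2)) / 256 := by
    have h := hHerm.det_eq_prod_eigenvalues
    rw [Cdet] at h
    simp only [Fintype.prod_prod_type, Fin.prod_univ_two] at h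
    norm_cast at h
    have h' : ((1 - (k1 ^ 2 + k2 ^ 2 + k3 ^ 2)) ^ 2
         - 2 * (1 - (k1 ^ 2 + k2 ^ 2 + k3 ^ 2)) * (l1 ^ 2 + l2 ^ 2 + l3 ^ 2)
         - (1 / 2) * (l1 ^ 2 + l2 ^ 2 + l3 ^ 2) ^ 2
         + 8 * l1 * l2 * l3
         + (1 / 2) * ((-l1 ^ 2 + l2 ^ 2 + l3 ^ 2) ^ 2 + (l1 ^ 2 - l2 ^ 2 + l3 ^ 2) ^ 2
             + (l1 ^ 2 + l2 ^ 2 - l3 ^ 2) ^ 2)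
         - 4 * (k1 ^ 2 * l1 ^ 2 + k2 ^ 2 * l2 ^ 2 + k3 ^ 2 * l3 ^ 2)) / 256
      = hHerm.eigenvalues (0,0) * hHerm.eigenvalues (0,1)
        * (hHerm.eigenvalues (1,0) * hHerm.eigenvalues (1,1)) := by
      apply RCLike.ofReal_inj (K := ℂ) |>.mp
      push_cast
      convert h using 2 <;> norm_num
    linear_combination -h'
  set a := hHerm.eigenvalues (0,0) with ha'
  set b := hHerm.eigenvalues (0,1) with hb'
  set c := hHerm.eigenvalues (1,0) with hc'
  set d := hHerm.eigenvalues (1,1) with hd'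
  set K := k1^2+k2^2+k3^2 with hK
  set L := l1^2+l2^2+l3^2 with hL
  have hE2 : a*b + a*c + a*d + b*c + b*d + c*d = (3 - K - L)/8 := by
    linear_combination ((a+b+c+d+1)/2) * h1 - (1/2) * h2
  have hE3 : a*b*c + a*b*d + a*c*d + b*c*d = (1 - K - L + 2*(l1*l2*l3))/16 := by
    linear_combination (((a+b+c+d)^2+(a+b+c+d)+1 - 3*(1+K+L)/4)/6) * h1
      - ((a+b+c+d)/2) * h2 + (1/3) * h3
  have hmain := quartic_nonneg_iff a b c d h1
  constructor
  · intro hPSD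
    have hnn : ∀ i, 0 ≤ hHerm.eigenvalues i := fun i => hPSD.eigenvalues_nonneg i
    obtain ⟨he2, he3, he4⟩ := hmain.mp ⟨hnn _, hnn _, hnn _, hnn _⟩
    rw [hE2] at he2
    rw [hE3] at he3
    rw [h4] at he4
    refine ⟨by linarith, by linarith, by linarith⟩
  · rintro ⟨i1, i2, i3⟩
    obtain ⟨ha, hb, hc, hd⟩ := hmain.mpr
      ⟨by rw [hE2]; linarith, by rw [hE3]; linarith, by rw [h4]; linarith⟩
    exact hHerm.posSemidef_iff_eigenvalues_nonneg.mpr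
      (by rintro ⟨i, j⟩; fin_cases i <;> fin_cases j <;> assumption)

lemma blochMap_apply (l1 l2 l3 k1 k2 k3 : ℝ) (A : Matrix (Fin 2) (Fin 2) ℂ) (a b : Fin 2) :
    blochMap l1 l2 l3 k1 k2 k3 A a b
      = 2 * ∑ i, ∑ j, A i j * choiBloch l1 l2 l3 k1 k2 k3 (i, a) (j, b) := by
  fin_cases a <;> fin_cases b <;>
    simp [blochMap, choiBloch, pauliX, pauliY, pauliZ, Matrix.trace, Matrix.mul_apply,
      Fin.sum_univ_two, Matrix.one_apply, Matrix.transpose_apply, Matrix.vecHead,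
      Matrix.vecTail, Matrix.vecMul, dotProduct, Complex.I_mul_I] <;>
    (try ring) <;> (try ring_nf) <;> (try simp [Complex.I_sq]) <;> (try ring)

noncomputable def phiMat : Matrix (Fin 2 × Fin 2) (Fin 2 × Fin 2) ℂ :=
  Matrix.of fun p q => if p.1 = p.2 ∧ q.1 = q.2 then (1/2 : ℂ) else 0

lemma phiMat_posSemidef : phiMat.PosSemidef := by
  refine Matrix.PosSemidef.of_dotProduct_mulVec_nonneg ?_ ?_
  · ext p q
    obtain ⟨p1, p2⟩ := p; obtain ⟨q1, q2⟩ := q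
    fin_cases p1 <;> fin_cases p2 <;> fin_cases q1 <;> fin_cases q2 <;>
      simp [phiMat, Matrix.conjTranspose_apply]
  · intro x
    have hx : dotProduct (star x) (phiMat *ᵥ x)
        = (1/2 : ℂ) * (star (x (0,0) + x (1,1)) * (x (0,0) + x (1,1))) := by
      simp [dotProduct, Matrix.mulVec, phiMat, Fintype.sum_prod_type,
        Fin.sum_univ_two, dotProduct]
      ring
    rw [hx]
    have h1 : (0:ℂ) ≤ star (x (0,0) + x (1,1)) * (x (0,0) + x (1,1)) :=
      star_mul_self_nonneg _
    have h2 : (0:ℂ) ≤ (1/2 : ℂ) := by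
      rw [show ((1/2 : ℂ)) = ((1/2 : ℝ) : ℂ) by norm_num]
      exact_mod_cast (by norm_num : (0:ℝ) ≤ (1/2:ℝ))
    exact mul_nonneg h2 h1

lemma cp_implies_choi_psd (l1 l2 l3 k1 k2 k3 : ℝ)
    (hCP : IsCompletelyPositive (blochMap l1 l2 l3 k1 k2 k3)) :
    (choiBloch l1 l2 l3 k1 k2 k3).PosSemidef := by
  have h := hCP 2 phiMat phiMat_posSemidef
  have heq : (Matrix.of fun (p q : Fin 2 × Fin 2) =>
      (blochMap l1 l2 l3 k1 k2 k3 (Matrix.of fun k l => phiMat (p.1, k) (q.1, l))) p.2 q.2)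
      = choiBloch l1 l2 l3 k1 k2 k3 := by
    ext p q
    obtain ⟨p1, p2⟩ := p; obtain ⟨q1, q2⟩ := q
    rw [Matrix.of_apply, blochMap_apply]
    fin_cases p1 <;> fin_cases q1 <;>
      simp [phiMat, Fin.sum_univ_two] <;> ring
  rwa [heq] at h

lemma sum_exchange4 {α β γ δ : Type*} [Fintype α] [Fintype β] [Fintype γ] [Fintype δ]
    (f : α → β → γ → δ → ℂ) :
    ∑ i, ∑ j, ∑ r, ∑ s, f i j r s = ∑ r, ∑ s, ∑ i, ∑ j, f i j r s :=
  calc ∑ i, ∑ j, ∑ r, ∑ s, f i j r s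
      = ∑ i, ∑ r, ∑ j, ∑ s, f i j r s :=
        Finset.sum_congr rfl fun i _ => Finset.sum_comm
    _ = ∑ r, ∑ i, ∑ j, ∑ s, f i j r s := Finset.sum_comm
    _ = ∑ r, ∑ i, ∑ s, ∑ j, f i j r s :=
        Finset.sum_congr rfl fun r _ => Finset.sum_congr rfl fun i _ => Finset.sum_comm
    _ = ∑ r, ∑ s, ∑ i, ∑ j, f i j r s :=
        Finset.sum_congr rfl fun r _ => Finset.sum_comm

open scoped MatrixOrder in
lemma psd_eq_ct_mul {n : Type*} [Fintype n] [DecidableEq n] {A : Matrix n n ℂ} (hA : A.PosSemidef) :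
    ∃ B : Matrix n n ℂ, A = Bᴴ * B := by
  obtain ⟨B, hB⟩ := CStarAlgebra.nonneg_iff_eq_star_mul_self.mp hA.nonneg
  exact ⟨B, hB⟩

lemma choi_psd_implies_cp (l1 l2 l3 k1 k2 k3 : ℝ)
    (hC : (choiBloch l1 l2 l3 k1 k2 k3).PosSemidef) :
    IsCompletelyPositive (blochMap l1 l2 l3 k1 k2 k3) := by
  obtain ⟨S, hS⟩ := psd_eq_ct_mul hC
  intro n ρ hρ
  obtain ⟨R, hR⟩ := psd_eq_ct_mul hρ
  set W : Matrix ((Fin n × Fin 2) × (Fin 2 × Fin 2)) (Fin n × Fin 2) ℂ :=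
    Matrix.of (fun rs p => ∑ i, R rs.1 (p.1, i) * S rs.2 (i, p.2)) with hW
  have hN : (Matrix.of fun (p q : Fin n × Fin 2) =>
      (blochMap l1 l2 l3 k1 k2 k3 (Matrix.of fun k l => ρ (p.1, k) (q.1, l))) p.2 q.2)
      = Wᴴ * W + Wᴴ * W := by
    ext p q
    rw [Matrix.of_apply, blochMap_apply]
    have lhs_eq : (2 : ℂ) * ∑ i, ∑ j, (Matrix.of fun k l => ρ (p.1, k) (q.1, l)) i j
          * choiBloch l1 l2 l3 k1 k2 k3 (i, p.2) (j, q.2)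
        = 2 * ∑ i, ∑ j, ∑ r, ∑ s,
            star (R r (p.1, i)) * R r (q.1, j) * (star (S s (i, p.2)) * S s (j, q.2)) := by
      congr 1
      refine Finset.sum_congr rfl fun i _ => Finset.sum_congr rfl fun j _ => ?_
      have hρapp : ρ (p.1, i) (q.1, j) = ∑ r, star (R r (p.1, i)) * R r (q.1, j) := by
        rw [hR]
        simp [Matrix.mul_apply, Matrix.conjTranspose_apply]
      have hCapp : choiBloch l1 l2 l3 k1 k2 k3 (i, p.2) (j, q.2)
          = ∑ s, star (S s (i, p.2)) * S s (j, q.2) := by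
        rw [hS]
        simp [Matrix.mul_apply, Matrix.conjTranspose_apply]
      rw [Matrix.of_apply, hρapp, hCapp, Finset.sum_mul_sum]
    rw [lhs_eq, sum_exchange4]
    have rhs_eq : (Wᴴ * W + Wᴴ * W) p q
        = 2 * ∑ r, ∑ s, ∑ i, ∑ j,
            star (R r (p.1, i)) * R r (q.1, j) * (star (S s (i, p.2)) * S s (j, q.2)) := by
      simp only [Matrix.add_apply, Matrix.mul_apply, Matrix.conjTranspose_apply, ← two_mul]
      congr 1
      rw [Fintype.sum_prod_type]
      refine Finset.sum_congr rfl fun r _ => Finset.sum_congr rfl fun s _ => ?_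
      rw [hW, Matrix.of_apply, Matrix.of_apply, star_sum, Finset.sum_mul_sum]
      refine Finset.sum_congr rfl fun i _ => Finset.sum_congr rfl fun j _ => ?_
      rw [star_mul']
      ring
    rw [rhs_eq]
  rw [hN]
  exact (Matrix.posSemidef_conjTranspose_mul_self W).add
    (Matrix.posSemidef_conjTranspose_mul_self W)

/-- A single-qubit channel with Bloch representation `v ↦ Λv + κ`,
`Λ = diag(λ₁,λ₂,λ₃)`, is completely positive iff its Choi matrix is positive
semidefinite, which is equivalent to the three inequalities
`|κ|² + |λ|² ≤ 3`, `|κ|² + |λ|² − 2λ₁λ₂λ₃ ≤ 1` and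
`(1−|κ|²)² − 2(1−|κ|²)|λ|² − ½|λ|⁴ + 8λ₁λ₂λ₃ + ½ΣᵢDᵢ² − 4K·L ≥ 0`. -/
theorem bloch_cp_iff_choi_psd_iff_ineqs (l1 l2 l3 k1 k2 k3 : ℝ) :
    (IsCompletelyPositive (blochMap l1 l2 l3 k1 k2 k3) ↔
      (choiBloch l1 l2 l3 k1 k2 k3).PosSemidef) ∧
    ((choiBloch l1 l2 l3 k1 k2 k3).PosSemidef ↔
      ((k1 ^ 2 + k2 ^ 2 + k3 ^ 2) + (l1 ^ 2 + l2 ^ 2 + l3 ^ 2) ≤ 3 ∧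
       (k1 ^ 2 + k2 ^ 2 + k3 ^ 2) + (l1 ^ 2 + l2 ^ 2 + l3 ^ 2) - 2 * l1 * l2 * l3 ≤ 1 ∧
       (1 - (k1 ^ 2 + k2 ^ 2 + k3 ^ 2)) ^ 2
         - 2 * (1 - (k1 ^ 2 + k2 ^ 2 + k3 ^ 2)) * (l1 ^ 2 + l2 ^ 2 + l3 ^ 2)
         - (1 / 2) * (l1 ^ 2 + l2 ^ 2 + l3 ^ 2) ^ 2
         + 8 * l1 * l2 * l3
         + (1 / 2) * ((-l1 ^ 2 + l2 ^ 2 + l3 ^ 2) ^ 2 + (l1 ^ 2 - l2 ^ 2 + l3 ^ 2) ^ 2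
             + (l1 ^ 2 + l2 ^ 2 - l3 ^ 2) ^ 2)
         - 4 * (k1 ^ 2 * l1 ^ 2 + k2 ^ 2 * l2 ^ 2 + k3 ^ 2 * l3 ^ 2) ≥ 0)) :=
  ⟨⟨cp_implies_choi_psd l1 l2 l3 k1 k2 k3, choi_psd_implies_cp l1 l2 l3 k1 k2 k3⟩,
    psd_iff_ineqs l1 l2 l3 k1 k2 k3⟩
end
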